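/- arXiv:2502.01178 — 2 statements merged into one kernel-verified Lean document; each statement's English description precedes it below -/
import Mathlib

section
/- Let s > 0, a ∈ (0,1), and let (y_t, u_t, v_t)_{t≥0} be the unique solution of the system y' = s y(1−y)/(y+(1+s)(1−y)), u' = u/2 + (u+v)y/2 − u/(y+(1+s)(1−y)), v' = v/2 + (u+v)(1−y)/2 − (1+s)v/(y+(1+s)(1−y)) with initial condition (a, a, 0). For any b ∈ [a,1) there exists a unique r_b ≥ 0 with y_{r_b} = b, and at this time u_{r_b} = b · a^{(1+s)/(2s)} (1−a)^{−1/(2s)} [ (1−b)^{1/(2s)} b^{−(1+s)/(2s)} + I(b) ] and v_{r_b} = (1−b) · a^{(1+s)/(2s)} (1−a)^{−1/(2s)} I(b), where I(b) = ∫_a^b (1−x)^{1/(2s)} x^{−(1+s)/(2s)} (1/2 + 1/(2s(1−x))) dx. -/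
open MeasureTheory Filter

/-- The drift function `g` of the dynamical system
`y' = s y(1−y)/(y+(1+s)(1−y))`,
`u' = u/2 + (u+v)y/2 − u/(y+(1+s)(1−y))`,
`v' = v/2 + (u+v)(1−y)/2 − (1+s)v/(y+(1+s)(1−y))`. -/
noncomputable def gdrift (s : ℝ) (p : ℝ × ℝ × ℝ) : ℝ × ℝ × ℝ :=
  (s * p.1 * (1 - p.1) / (p.1 + (1 + s) * (1 - p.1)),
   p.2.1 / 2 + (p.2.1 + p.2.2) * p.1 / 2 - p.2.1 / (p.1 + (1 + s) * (1 - p.1)),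
   p.2.2 / 2 + (p.2.1 + p.2.2) * (1 - p.1) / 2 -
     (1 + s) * p.2.2 / (p.1 + (1 + s) * (1 - p.1)))

/-- A solution of the dynamical system on `[0,∞)` with values in `[0,1]³` and
initial condition `(a, a, 0)`. -/
def IsSolSys (s a : ℝ) (z : ℝ → ℝ × ℝ × ℝ) : Prop :=
  z 0 = (a, a, 0) ∧ ∀ t ∈ Set.Ici (0 : ℝ),
    z t ∈ Set.Icc (0 : ℝ) 1 ×ˢ Set.Icc (0 : ℝ) 1 ×ˢ Set.Icc (0 : ℝ) 1 ∧
    HasDerivWithinAt z (gdrift s (z t)) (Set.Ici 0) t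

/-- The integral `∫_a^y (1−x)^{1/(2s)} x^{−(1+s)/(2s)} (1/2 + 1/(2s(1−x))) dx`. -/
noncomputable def intI (s a y : ℝ) : ℝ :=
  ∫ x in a..y, (1 - x) ^ (1 / (2 * s)) / x ^ ((1 + s) / (2 * s)) *
    (1 / 2 + 1 / (2 * s) * (1 / (1 - x)))

/-- `u` expressed as a function of `y`:
`u = y ⬝ a^{(1+s)/(2s)} (1−a)^{−1/(2s)} [(1−y)^{1/(2s)} y^{−(1+s)/(2s)} + ∫_a^y ⋯ dx]`. -/
noncomputable def uval (s a y : ℝ) : ℝ :=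
  y * (a ^ ((1 + s) / (2 * s)) / (1 - a) ^ (1 / (2 * s))) *
    ((1 - y) ^ (1 / (2 * s)) / y ^ ((1 + s) / (2 * s)) + intI s a y)

/-- `v` expressed as a function of `y`:
`v = (1−y) ⬝ a^{(1+s)/(2s)} (1−a)^{−1/(2s)} ∫_a^y ⋯ dx`. -/
noncomputable def vval (s a y : ℝ) : ℝ :=
  (1 - y) * (a ^ ((1 + s) / (2 * s)) / (1 - a) ^ (1 / (2 * s))) * intI s a y

private lemma D_ge_one {s x : ℝ} (hs : 0 < s) (hx : x ≤ 1) : 1 ≤ x + (1 + s) * (1 - x) := by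
  nlinarith

private lemma contF {s : ℝ} (hs : 0 < s) :
    ContinuousOn (fun x : ℝ => (1 - x) ^ (1 / (2 * s)) / x ^ ((1 + s) / (2 * s)) *
      (1 / 2 + 1 / (2 * s) * (1 / (1 - x)))) (Set.Ioo (0:ℝ) 1) := by
  apply ContinuousOn.mul
  · apply ContinuousOn.div
    · exact ((continuous_const.sub continuous_id).continuousOn).rpow_const
        (fun x hx => Or.inl (by simpa using sub_ne_zero.mpr (ne_of_gt hx.2)))
    · exact (continuous_id.continuousOn).rpow_const (fun x hx => Or.inl hx.1.ne')
    · intro x hx; exact (Real.rpow_pos_of_pos hx.1 _).ne'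
  · apply ContinuousOn.add continuousOn_const
    apply ContinuousOn.mul continuousOn_const
    apply ContinuousOn.div continuousOn_const (continuous_const.sub continuous_id).continuousOn
    intro x hx
    simpa using sub_ne_zero.mpr (ne_of_gt hx.2)

private lemma intI_hasDerivAt {s a : ℝ} (hs : 0 < s) (ha : a ∈ Set.Ioo (0:ℝ) 1) {x : ℝ}
    (hx : x ∈ Set.Ioo (0:ℝ) 1) :
    HasDerivAt (fun y => intI s a y)
      ((1 - x) ^ (1 / (2 * s)) / x ^ ((1 + s) / (2 * s)) *
        (1 / 2 + 1 / (2 * s) * (1 / (1 - x)))) x := by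
  have hsub : Set.uIcc a x ⊆ Set.Ioo (0:ℝ) 1 :=
    (Set.ordConnected_Ioo).uIcc_subset ha hx
  have hint : IntervalIntegrable (fun x : ℝ => (1 - x) ^ (1 / (2 * s)) / x ^ ((1 + s) / (2 * s)) *
      (1 / 2 + 1 / (2 * s) * (1 / (1 - x)))) volume a x :=
    ((contF hs).mono hsub).intervalIntegrable
  have hmeas := (contF hs).stronglyMeasurableAtFilter (μ := volume) isOpen_Ioo x hx
  have hcont := (contF hs).continuousAt (isOpen_Ioo.mem_nhds hx)
  unfold intI
  exact intervalIntegral.integral_hasDerivAt_right hint hmeas hcont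

private lemma uv_deriv {s a : ℝ} (hs : 0 < s) (ha : a ∈ Set.Ioo (0:ℝ) 1) {x : ℝ}
    (hx : x ∈ Set.Ioo (0:ℝ) 1) :
    ∃ du dv : ℝ,
      HasDerivAt (fun y => uval s a y) du x ∧ HasDerivAt (fun y => vval s a y) dv x ∧
      du * (s * x * (1 - x) / (x + (1 + s) * (1 - x))) =
        uval s a x / 2 + (uval s a x + vval s a x) * x / 2 -
          uval s a x / (x + (1 + s) * (1 - x)) ∧
      dv * (s * x * (1 - x) / (x + (1 + s) * (1 - x))) =
        vval s a x / 2 + (uval s a x + vval s a x) * (1 - x) / 2 -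
          (1 + s) * vval s a x / (x + (1 + s) * (1 - x)) := by
  obtain ⟨hx0, hx1⟩ := hx
  have h1x : (0:ℝ) < 1 - x := by linarith
  have hone : HasDerivAt (fun y : ℝ => 1 - y) (-1) x := by
    simpa using (hasDerivAt_id x).const_sub 1
  have hB : HasDerivAt (fun y : ℝ => (1 - y) ^ (1 / (2 * s)))
      (1 / (2 * s) * (1 - x) ^ (1 / (2 * s) - 1) * (-1)) x := by
    exact (Real.hasDerivAt_rpow_const (Or.inl h1x.ne')).comp x hone
  have hA : HasDerivAt (fun y : ℝ => y ^ ((1 + s) / (2 * s)))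
      ((1 + s) / (2 * s) * x ^ ((1 + s) / (2 * s) - 1)) x :=
    Real.hasDerivAt_rpow_const (Or.inl hx0.ne')
  have hApos : 0 < x ^ ((1 + s) / (2 * s)) := Real.rpow_pos_of_pos hx0 _
  have hP := hB.div hA hApos.ne'
  have hI := intI_hasDerivAt hs ha ⟨hx0, hx1⟩
  have hu : HasDerivAt (fun y => uval s a y)
      (1 * (a ^ ((1 + s) / (2 * s)) / (1 - a) ^ (1 / (2 * s))) *
        ((1 - x) ^ (1 / (2 * s)) / x ^ ((1 + s) / (2 * s)) + intI s a x) +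
       x * (a ^ ((1 + s) / (2 * s)) / (1 - a) ^ (1 / (2 * s))) *
        ((1 / (2 * s) * (1 - x) ^ (1 / (2 * s) - 1) * -1 * x ^ ((1 + s) / (2 * s)) -
            (1 - x) ^ (1 / (2 * s)) * ((1 + s) / (2 * s) * x ^ ((1 + s) / (2 * s) - 1))) /
          (x ^ ((1 + s) / (2 * s))) ^ 2 +
          (1 - x) ^ (1 / (2 * s)) / x ^ ((1 + s) / (2 * s)) *
            (1 / 2 + 1 / (2 * s) * (1 / (1 - x))))) x := by
    unfold uval
    exact ((hasDerivAt_id x).mul_const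
        (a ^ ((1 + s) / (2 * s)) / (1 - a) ^ (1 / (2 * s)))).mul (hP.add hI)
  have hv : HasDerivAt (fun y => vval s a y)
      (-1 * (a ^ ((1 + s) / (2 * s)) / (1 - a) ^ (1 / (2 * s))) * intI s a x +
       (1 - x) * (a ^ ((1 + s) / (2 * s)) / (1 - a) ^ (1 / (2 * s))) *
        ((1 - x) ^ (1 / (2 * s)) / x ^ ((1 + s) / (2 * s)) *
          (1 / 2 + 1 / (2 * s) * (1 / (1 - x))))) x := by
    unfold vval
    exact (hone.mul_const
        (a ^ ((1 + s) / (2 * s)) / (1 - a) ^ (1 / (2 * s)))).mul hI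
  have hCb : (0:ℝ) < (1 - a) ^ (1 / (2 * s)) :=
    Real.rpow_pos_of_pos (by linarith [ha.2]) _
  have hD : (0:ℝ) < x + (1 + s) * (1 - x) := by nlinarith
  refine ⟨_, _, hu, hv, ?_, ?_⟩
  · unfold uval vval
    rw [Real.rpow_sub_one hx0.ne', Real.rpow_sub_one h1x.ne']
    have hApos' := hApos
    have hCb' := hCb
    generalize x ^ ((1 + s) / (2 * s)) = A at hApos' ⊢
    generalize (1 - x) ^ (1 / (2 * s)) = B
    generalize a ^ ((1 + s) / (2 * s)) = Ca
    generalize (1 - a) ^ (1 / (2 * s)) = Cb at hCb' ⊢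
    generalize intI s a x = J
    field_simp [hx0.ne', h1x.ne', hApos'.ne', hCb'.ne', hD.ne', hs.ne']
    ring
  · unfold uval vval
    have hApos' := hApos
    have hCb' := hCb
    generalize x ^ ((1 + s) / (2 * s)) = A at hApos' ⊢
    generalize (1 - x) ^ (1 / (2 * s)) = B
    generalize a ^ ((1 + s) / (2 * s)) = Ca
    generalize (1 - a) ^ (1 / (2 * s)) = Cb at hCb' ⊢
    generalize intI s a x = J
    field_simp [hx0.ne', h1x.ne', hApos'.ne', hCb'.ne', hD.ne', hs.ne']
    ring

private lemma uval_a {s a : ℝ} (hs : 0 < s) (ha : a ∈ Set.Ioo (0:ℝ) 1) : uval s a a = a := by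
  have h1 : intI s a a = 0 := intervalIntegral.integral_same
  have h2 : (0:ℝ) < a ^ ((1 + s) / (2 * s)) := Real.rpow_pos_of_pos ha.1 _
  have h3 : (0:ℝ) < (1 - a) ^ (1 / (2 * s)) := Real.rpow_pos_of_pos (by linarith [ha.2]) _
  unfold uval
  rw [h1]
  rw [add_zero, mul_assoc, div_mul_div_comm, mul_comm ((1 - a) ^ (1 / (2 * s))) (a ^ ((1 + s) / (2 * s))),
    div_self (mul_ne_zero h2.ne' h3.ne'), mul_one]

private lemma vval_a {s a : ℝ} : vval s a a = 0 := by
  have h1 : intI s a a = 0 := intervalIntegral.integral_same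
  unfold vval
  rw [h1, mul_zero]

private lemma abs_bound1 {p q Y D m : ℝ} (hp : |p| ≤ m) (hq : |q| ≤ m) (hY0 : 0 ≤ Y)
    (hY1 : Y ≤ 1) (hD : 1 ≤ D) : |p / 2 + (p + q) * Y / 2 - p / D| ≤ 3 * m := by
  have hm : 0 ≤ m := (abs_nonneg p).trans hp
  have h1 : |p / D| ≤ m := by
    rw [abs_div, abs_of_pos (by linarith : (0:ℝ) < D)]
    exact le_trans (div_le_self (abs_nonneg _) hD) hp
  have h2 : |(p + q) * Y / 2| ≤ m := by
    rw [abs_div, abs_mul, abs_of_nonneg hY0]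
    have ha1 : |p + q| ≤ 2 * m := (abs_add_le _ _).trans (by linarith)
    have ha2 : |p + q| * Y ≤ 2 * m :=
      le_trans (mul_le_of_le_one_right (abs_nonneg _) hY1) ha1
    rw [show |(2:ℝ)| = 2 by norm_num]
    linarith
  have h3 : |p / 2| ≤ m := by
    rw [abs_div, show |(2:ℝ)| = 2 by norm_num]
    linarith
  calc |p / 2 + (p + q) * Y / 2 - p / D| ≤ |p / 2 + (p + q) * Y / 2| + |p / D| := abs_sub _ _
    _ ≤ |p / 2| + |(p + q) * Y / 2| + |p / D| := by linarith [abs_add_le (p/2) ((p+q)*Y/2)]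
    _ ≤ 3 * m := by linarith

private lemma abs_bound2 {s p q Y D m : ℝ} (hs : 0 < s) (hp : |p| ≤ m) (hq : |q| ≤ m)
    (hY0 : 0 ≤ Y) (hY1 : Y ≤ 1) (hD : 1 ≤ D) :
    |q / 2 + (p + q) * (1 - Y) / 2 - (1 + s) * q / D| ≤ (3 + s) * m := by
  have hm : 0 ≤ m := (abs_nonneg p).trans hp
  have h1 : |(1 + s) * q / D| ≤ (1 + s) * m := by
    rw [abs_div, abs_of_pos (by linarith : (0:ℝ) < D), abs_mul,
      abs_of_pos (by linarith : (0:ℝ) < 1 + s)]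
    have : (1 + s) * |q| / D ≤ (1 + s) * |q| :=
      div_le_self (by positivity) hD
    refine this.trans ?_
    have : (1 + s) * |q| ≤ (1 + s) * m := by nlinarith
    linarith
  have h2 : |(p + q) * (1 - Y) / 2| ≤ m := by
    rw [abs_div, abs_mul, abs_of_nonneg (by linarith : (0:ℝ) ≤ 1 - Y)]
    have ha1 : |p + q| ≤ 2 * m := (abs_add_le _ _).trans (by linarith)
    have ha2 : |p + q| * (1 - Y) ≤ 2 * m :=
      le_trans (mul_le_of_le_one_right (abs_nonneg _) (by linarith)) ha1
    rw [show |(2:ℝ)| = 2 by norm_num]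
    linarith
  have h3 : |q / 2| ≤ m := by
    rw [abs_div, show |(2:ℝ)| = 2 by norm_num]
    linarith
  calc |q / 2 + (p + q) * (1 - Y) / 2 - (1 + s) * q / D|
      ≤ |q / 2 + (p + q) * (1 - Y) / 2| + |(1 + s) * q / D| := abs_sub _ _
    _ ≤ |q / 2| + |(p + q) * (1 - Y) / 2| + |(1 + s) * q / D| := by
        linarith [abs_add_le (q/2) ((p+q)*(1-Y)/2)]
    _ ≤ (3 + s) * m := by nlinarith

/-- For the solution of the dynamical system started from `(a, a, 0)`: for any
`b ∈ [a, 1)` there is a unique time `r_b ≥ 0` at which `y` reaches `b`, and at this time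
`u_{r_b} = b ⬝ a^{(1+s)/(2s)}(1−a)^{−1/(2s)}[(1−b)^{1/(2s)} b^{−(1+s)/(2s)} + I(b)]` and
`v_{r_b} = (1−b) ⬝ a^{(1+s)/(2s)}(1−a)^{−1/(2s)} I(b)`, where
`I(b) = ∫_a^b (1−x)^{1/(2s)} x^{−(1+s)/(2s)}(1/2 + 1/(2s(1−x))) dx`. -/
theorem dynamical_system_value_at_level_b
    (s a : ℝ) (hs : 0 < s) (ha : a ∈ Set.Ioo (0 : ℝ) 1)
    (z : ℝ → ℝ × ℝ × ℝ) (hz : IsSolSys s a z) :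
    ∀ b ∈ Set.Ico a 1,
      (∃! r : ℝ, 0 ≤ r ∧ (z r).1 = b) ∧
      (∀ r : ℝ, 0 ≤ r → (z r).1 = b →
        (z r).2.1 = uval s a b ∧ (z r).2.2 = vval s a b) := by
  obtain ⟨hz0, hzd⟩ := hz
  have hmem : ∀ t ∈ Set.Ici (0:ℝ), (z t).1 ∈ Set.Icc (0:ℝ) 1 ∧
      (z t).2.1 ∈ Set.Icc (0:ℝ) 1 ∧ (z t).2.2 ∈ Set.Icc (0:ℝ) 1 := by
    intro t ht
    have h := (hzd t ht).1
    exact ⟨h.1, h.2.1, h.2.2⟩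
  have hzc : ContinuousOn z (Set.Ici 0) := fun t ht => ((hzd t ht).2).continuousWithinAt
  have hYc : ContinuousOn (fun t => (z t).1) (Set.Ici 0) := continuous_fst.comp_continuousOn hzc
  have hY' : ∀ t ∈ Set.Ici (0:ℝ), HasDerivWithinAt (fun t => (z t).1)
      (s * (z t).1 * (1 - (z t).1) / ((z t).1 + (1 + s) * (1 - (z t).1))) (Set.Ici 0) t := by
    intro t ht
    have h := ((ContinuousLinearMap.fst ℝ ℝ (ℝ × ℝ)).hasFDerivAt).comp_hasDerivWithinAt t
      (hzd t ht).2
    simpa [gdrift, Function.comp_def] using h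
  have hU' : ∀ t ∈ Set.Ici (0:ℝ), HasDerivWithinAt (fun t => (z t).2.1)
      ((z t).2.1 / 2 + ((z t).2.1 + (z t).2.2) * (z t).1 / 2 -
        (z t).2.1 / ((z t).1 + (1 + s) * (1 - (z t).1))) (Set.Ici 0) t := by
    intro t ht
    have h := (((ContinuousLinearMap.fst ℝ ℝ ℝ).comp
        (ContinuousLinearMap.snd ℝ ℝ (ℝ × ℝ))).hasFDerivAt).comp_hasDerivWithinAt t (hzd t ht).2
    simpa [gdrift, Function.comp_def] using h
  have hV' : ∀ t ∈ Set.Ici (0:ℝ), HasDerivWithinAt (fun t => (z t).2.2)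
      ((z t).2.2 / 2 + ((z t).2.1 + (z t).2.2) * (1 - (z t).1) / 2 -
        (1 + s) * (z t).2.2 / ((z t).1 + (1 + s) * (1 - (z t).1))) (Set.Ici 0) t := by
    intro t ht
    have h := (((ContinuousLinearMap.snd ℝ ℝ ℝ).comp
        (ContinuousLinearMap.snd ℝ ℝ (ℝ × ℝ))).hasFDerivAt).comp_hasDerivWithinAt t (hzd t ht).2
    simpa [gdrift, Function.comp_def] using h
  have hYmono : MonotoneOn (fun t => (z t).1) (Set.Ici 0) := by
    apply monotoneOn_of_hasDerivWithinAt_nonneg (convex_Ici 0) hYc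
      (f' := fun t => s * (z t).1 * (1 - (z t).1) / ((z t).1 + (1 + s) * (1 - (z t).1)))
    · intro t ht
      rw [interior_Ici] at ht ⊢
      exact ((hY' t (Set.mem_Ioi.mp ht).le).hasDerivAt (Ici_mem_nhds ht)).hasDerivWithinAt
    · intro t ht
      rw [interior_Ici] at ht
      have hm := (hmem t (Set.mem_Ioi.mp ht).le).1
      have h1 : (0:ℝ) < (z t).1 + (1 + s) * (1 - (z t).1) :=
        lt_of_lt_of_le one_pos (D_ge_one hs hm.2)
      have h2 : 0 ≤ s * (z t).1 * (1 - (z t).1) :=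
        mul_nonneg (mul_nonneg hs.le hm.1) (by linarith [hm.2])
      exact div_nonneg h2 h1.le
  have hY0 : (z 0).1 = a := by rw [hz0]
  intro b hb
  obtain ⟨hab, hb1⟩ := hb
  have hbI : b ∈ Set.Ioo (0:ℝ) 1 := ⟨lt_of_lt_of_le ha.1 hab, hb1⟩
  -- Part 2: values at any hitting time
  have key : ∀ r : ℝ, 0 ≤ r → (z r).1 = b →
      (z r).2.1 = uval s a b ∧ (z r).2.2 = vval s a b := by
    intro r hr hYr
    have hrange : ∀ t ∈ Set.Icc (0:ℝ) r, (z t).1 ∈ Set.Icc a b := by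
      intro t ht
      constructor
      · rw [← hY0]; exact hYmono Set.self_mem_Ici ht.1 ht.1
      · rw [← hYr]; exact hYmono ht.1 hr ht.2
    have hx : ∀ t ∈ Set.Icc (0:ℝ) r, (z t).1 ∈ Set.Ioo (0:ℝ) 1 := fun t ht =>
      ⟨lt_of_lt_of_le ha.1 (hrange t ht).1, lt_of_le_of_lt (hrange t ht).2 hb1⟩
    set w : ℝ → ℝ × ℝ := fun t =>
      ((z t).2.1 - uval s a (z t).1, (z t).2.2 - vval s a (z t).1) with hw
    set wd : ℝ → ℝ × ℝ := fun t =>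
      ((w t).1 / 2 + ((w t).1 + (w t).2) * (z t).1 / 2 -
        (w t).1 / ((z t).1 + (1 + s) * (1 - (z t).1)),
       (w t).2 / 2 + ((w t).1 + (w t).2) * (1 - (z t).1) / 2 -
        (1 + s) * (w t).2 / ((z t).1 + (1 + s) * (1 - (z t).1))) with hwd
    have hzcr : ContinuousOn z (Set.Icc 0 r) := hzc.mono Set.Icc_subset_Ici_self
    have hYcr : ContinuousOn (fun t => (z t).1) (Set.Icc 0 r) :=
      hYc.mono Set.Icc_subset_Ici_self
    have hucont : ContinuousOn (fun t => uval s a (z t).1) (Set.Icc 0 r) := by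
      intro t ht
      obtain ⟨du, dv, hdu, hdv, -, -⟩ := uv_deriv hs ha (hx t ht)
      exact ContinuousAt.comp_continuousWithinAt
        (f := fun t => (z t).1) (g := fun y => uval s a y) hdu.continuousAt (hYcr t ht)
    have hvcont : ContinuousOn (fun t => vval s a (z t).1) (Set.Icc 0 r) := by
      intro t ht
      obtain ⟨du, dv, hdu, hdv, -, -⟩ := uv_deriv hs ha (hx t ht)
      exact ContinuousAt.comp_continuousWithinAt
        (f := fun t => (z t).1) (g := fun y => vval s a y) hdv.continuousAt (hYcr t ht)
    have hwcont : ContinuousOn w (Set.Icc 0 r) :=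
      ContinuousOn.prodMk
        ((((continuous_fst.comp continuous_snd).comp_continuousOn hzcr)).sub hucont)
        ((((continuous_snd.comp continuous_snd).comp_continuousOn hzcr)).sub hvcont)
    have hwderiv : ∀ t ∈ Set.Ico (0:ℝ) r, HasDerivWithinAt w (wd t) (Set.Ici t) t := by
      intro t ht
      have ht0 : (0:ℝ) ≤ t := ht.1
      have hmI : Set.Ici t ⊆ Set.Ici (0:ℝ) := Set.Ici_subset_Ici.mpr ht0
      obtain ⟨du, dv, hdu, hdv, idu, idv⟩ := uv_deriv hs ha (hx t ⟨ht.1, ht.2.le⟩)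
      have hYd := (hY' t ht0).mono hmI
      have hUd := (hU' t ht0).mono hmI
      have hVd := (hV' t ht0).mono hmI
      have huc : HasDerivWithinAt (fun τ => uval s a (z τ).1)
          (du * (s * (z t).1 * (1 - (z t).1) / ((z t).1 + (1 + s) * (1 - (z t).1))))
          (Set.Ici t) t := by have h := hdu.comp_hasDerivWithinAt t hYd; exact h
      have hvc : HasDerivWithinAt (fun τ => vval s a (z τ).1)
          (dv * (s * (z t).1 * (1 - (z t).1) / ((z t).1 + (1 + s) * (1 - (z t).1))))
          (Set.Ici t) t := by have h := hdv.comp_hasDerivWithinAt t hYd; exact h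
      have hprod := (hUd.sub huc).prodMk (hVd.sub hvc)
      convert hprod using 1
      · rfl
      rw [hwd, Prod.mk.injEq]
      constructor
      · rw [idu]; simp only [hw]; ring
      · rw [idv]; simp only [hw]; ring
    have hw0 : w 0 = 0 := by
      simp only [hw, hz0]
      rw [Prod.mk.injEq]
      constructor
      · simp [uval_a hs ha]
      · simp [vval_a]
    have hbound : ∀ t ∈ Set.Ico (0:ℝ) r, ‖wd t‖ ≤ (3 + s) * ‖w t‖ + 0 := by
      intro t ht
      have hm := (hmem t ht.1).1
      have hD1 : 1 ≤ (z t).1 + (1 + s) * (1 - (z t).1) := D_ge_one hs hm.2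
      have hp : |(w t).1| ≤ ‖w t‖ := by
        rw [Prod.norm_def, Real.norm_eq_abs, Real.norm_eq_abs]; exact le_max_left _ _
      have hq : |(w t).2| ≤ ‖w t‖ := by
        rw [Prod.norm_def, Real.norm_eq_abs, Real.norm_eq_abs]; exact le_max_right _ _
      have hb1' := abs_bound1 hp hq hm.1 hm.2 hD1
      have hb2' := abs_bound2 hs hp hq hm.1 hm.2 hD1
      rw [hwd, add_zero, Prod.norm_def, Real.norm_eq_abs, Real.norm_eq_abs]
      have hwn : 0 ≤ ‖w t‖ := norm_nonneg _
      apply max_le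
      · exact hb1'.trans (by nlinarith)
      · exact hb2'
    have hgron := norm_le_gronwallBound_of_norm_deriv_right_le (δ := 0) (K := 3 + s) (ε := 0)
      hwcont hwderiv (by rw [hw0]; simp) hbound r ⟨hr, le_refl r⟩
    rw [gronwallBound_ε0_δ0] at hgron
    have hwr : w r = 0 := by
      have := norm_le_zero_iff.mp hgron
      exact this
    have h1 : (z r).2.1 - uval s a (z r).1 = 0 := congrArg Prod.fst hwr
    have h2 : (z r).2.2 - vval s a (z r).1 = 0 := congrArg Prod.snd hwr
    rw [hYr] at h1 h2
    exact ⟨by linarith, by linarith⟩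
  -- existence of hitting time
  have hex : ∃ r : ℝ, 0 ≤ r ∧ (z r).1 = b := by
    by_contra hno
    push_neg at hno
    have hlt : ∀ t : ℝ, 0 ≤ t → (z t).1 < b := by
      intro t ht
      rcases lt_or_ge (z t).1 b with h | h
      · exact h
      · exfalso
        have hcont : ContinuousOn (fun t => (z t).1) (Set.Icc 0 t) :=
          hYc.mono Set.Icc_subset_Ici_self
        have hbmem : b ∈ Set.Icc ((z 0).1) ((z t).1) := by rw [hY0]; exact ⟨hab, h⟩
        obtain ⟨r, hrmem, hrb⟩ := intermediate_value_Icc ht hcont hbmem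
        exact hno r hrmem.1 hrb
    set c := s * a * (1 - b) / (1 + s) with hc
    have hc0 : 0 < c := by
      apply div_pos
      · exact mul_pos (mul_pos hs ha.1) (by linarith)
      · linarith
    have hg : MonotoneOn (fun t => (z t).1 - c * t) (Set.Ici 0) := by
      apply monotoneOn_of_hasDerivWithinAt_nonneg (convex_Ici 0)
        (hYc.sub (continuous_const.mul continuous_id).continuousOn)
        (f' := fun t => s * (z t).1 * (1 - (z t).1) / ((z t).1 + (1 + s) * (1 - (z t).1)) - c)
      · intro t ht
        rw [interior_Ici] at ht ⊢
        have h2 : HasDerivAt (fun t : ℝ => c * t) c t := by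
          simpa using (hasDerivAt_id t).const_mul c
        exact (((hY' t (Set.mem_Ioi.mp ht).le).hasDerivAt (Ici_mem_nhds ht)).sub h2).hasDerivWithinAt
      · intro t ht
        rw [interior_Ici] at ht
        have hm := (hmem t (Set.mem_Ioi.mp ht).le).1
        have hYa : a ≤ (z t).1 := by
          rw [← hY0]; exact hYmono Set.self_mem_Ici (Set.mem_Ioi.mp ht).le (Set.mem_Ioi.mp ht).le
        have hYb : (z t).1 < b := hlt t (Set.mem_Ioi.mp ht).le
        have hD : (0:ℝ) < (z t).1 + (1 + s) * (1 - (z t).1) :=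
          lt_of_lt_of_le one_pos (D_ge_one hs hm.2)
        have h1 : c ≤ s * (z t).1 * (1 - (z t).1) / ((z t).1 + (1 + s) * (1 - (z t).1)) := by
          rw [hc, div_le_div_iff₀ (by linarith) hD]
          have e1 : a * (1 - b) ≤ a * (1 - (z t).1) := by nlinarith [ha.1]
          have e2 : a * (1 - (z t).1) ≤ (z t).1 * (1 - (z t).1) := by nlinarith [hm.2]
          have f0 : 0 ≤ s * a * (1 - b) :=
            mul_nonneg (mul_nonneg hs.le ha.1.le) (by linarith)
          have hDle : (z t).1 + (1 + s) * (1 - (z t).1) ≤ 1 + s := by nlinarith [hm.1]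
          have g1 : s * a * (1 - b) * ((z t).1 + (1 + s) * (1 - (z t).1)) ≤
              s * a * (1 - b) * (1 + s) := mul_le_mul_of_nonneg_left hDle f0
          have g2 : s * (a * (1 - b)) ≤ s * ((z t).1 * (1 - (z t).1)) :=
            mul_le_mul_of_nonneg_left (e1.trans e2) hs.le
          nlinarith [g1, g2]
        linarith
    set T : ℝ := (b - a) / c + 1 with hT
    have hT0 : (0:ℝ) ≤ T := by
      rw [hT]
      have h' : 0 ≤ (b - a) / c := div_nonneg (by linarith) hc0.le
      linarith
    have hmono := hg Set.self_mem_Ici (show T ∈ Set.Ici (0:ℝ) from hT0) hT0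
    simp only [mul_zero, sub_zero, hY0] at hmono
    have hcT : c * T = b - a + c := by
      rw [hT]; field_simp
    have hltT := hlt T hT0
    linarith [hmono, hcT]
  -- uniqueness of hitting time
  have huniq : ∀ r1 r2 : ℝ, 0 ≤ r1 → 0 ≤ r2 → (z r1).1 = b → (z r2).1 = b → r1 < r2 → False := by
    intro r1 r2 h1 h2 hbr1 hbr2 h12
    have hconst : ∀ t ∈ Set.Icc r1 r2, (z t).1 = b := by
      intro t ht
      have l1 : b ≤ (z t).1 := by
        rw [← hbr1]; exact hYmono h1 (h1.trans ht.1) ht.1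
      have l2 : (z t).1 ≤ b := by
        rw [← hbr2]; exact hYmono (h1.trans ht.1) h2 ht.2
      linarith
    have hder1 : HasDerivWithinAt (fun t => (z t).1)
        (s * (z r1).1 * (1 - (z r1).1) / ((z r1).1 + (1 + s) * (1 - (z r1).1)))
        (Set.Icc r1 r2) r1 := (hY' r1 h1).mono (fun x hx => h1.trans hx.1)
    have hder2 : HasDerivWithinAt (fun t => (z t).1) 0 (Set.Icc r1 r2) r1 :=
      (hasDerivWithinAt_const r1 _ b).congr hconst (hconst r1 ⟨le_refl r1, h12.le⟩)
    have heq := (uniqueDiffOn_Icc h12 r1 ⟨le_refl r1, h12.le⟩).eq_deriv _ hder1 hder2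
    rw [hbr1] at heq
    have hD : (0:ℝ) < b + (1 + s) * (1 - b) :=
      lt_of_lt_of_le one_pos (D_ge_one hs hbI.2.le)
    have hpos : 0 < s * b * (1 - b) / (b + (1 + s) * (1 - b)) := by
      apply div_pos
      · exact mul_pos (mul_pos hs hbI.1) (by linarith [hbI.2])
      · exact hD
    rw [heq] at hpos
    exact lt_irrefl 0 hpos
  obtain ⟨r, hr0, hrb⟩ := hex
  refine ⟨⟨r, ⟨hr0, hrb⟩, ?_⟩, key⟩
  rintro r' ⟨hr'0, hr'b⟩
  by_contra hne
  rcases lt_or_gt_of_ne hne with h | h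
  · exact huniq r' r hr'0 hr0 hr'b hrb h
  · exact huniq r r' hr0 hr'0 hrb hr'b h
end

section
/- Let c > 0, K > 0, G > 0 and an integer N ≥ 1. Let g : [0,1]³ → ℝ³ be K-Lipschitz with ‖g(z)‖ ≤ G for all z ∈ [0,1]³, let z : [0,c] → [0,1]³ satisfy z_t = z_0 + ∫_0^t g(z_s) ds for all t ∈ [0,c], and let (Z_n)_{0 ≤ n ≤ ⌊cN⌋} be a sequence in [0,1]³ and (A_k)_{1 ≤ k ≤ ⌊cN⌋} a sequence in ℝ³ such that Z_n = Z_0 + Σ_{k=1}^n A_k + (1/N) Σ_{k=0}^{n−1} g(Z_k) for all 0 ≤ n ≤ ⌊cN⌋. Then for all t ∈ [0,c], ‖Z_{⌊Nt⌋} − z_t‖ ≤ ( ‖Z_0 − z_0‖ + max_{0 ≤ n ≤ ⌊cN⌋} ‖Σ_{k=1}^n A_k‖ + G/N ) e^{Kt}. -/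
/-- The Euclidean norm on `ℝ³`. -/
noncomputable def norm3 (p : ℝ × ℝ × ℝ) : ℝ :=
  Real.sqrt (p.1 ^ 2 + p.2.1 ^ 2 + p.2.2 ^ 2)

/-- The unit box `[0,1]³`. -/
def unitBox : Set (ℝ × ℝ × ℝ) :=
  Set.Icc (0 : ℝ) 1 ×ˢ Set.Icc (0 : ℝ) 1 ×ˢ Set.Icc (0 : ℝ) 1

open MeasureTheory intervalIntegral Set



noncomputable def Lmap3 : (ℝ × ℝ × ℝ) →ₗ[ℝ] EuclideanSpace ℝ (Fin 3) where
  toFun p := WithLp.toLp 2 ![p.1, p.2.1, p.2.2]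
  map_add' p q := by ext i; fin_cases i <;> simp
  map_smul' r p := by ext i; fin_cases i <;> simp

noncomputable def Lclm3 : (ℝ × ℝ × ℝ) →L[ℝ] EuclideanSpace ℝ (Fin 3) :=
  Lmap3.toContinuousLinearMap

lemma norm3_eq (p : ℝ × ℝ × ℝ) : norm3 p = ‖Lclm3 p‖ := by
  rw [EuclideanSpace.norm_eq]
  simp [norm3, Fin.sum_univ_three, Lclm3, Lmap3, Real.norm_eq_abs, sq_abs]

lemma norm3_nonneg (p : ℝ × ℝ × ℝ) : 0 ≤ norm3 p := by rw [norm3_eq]; positivity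

lemma norm3_add_le (p q : ℝ × ℝ × ℝ) : norm3 (p + q) ≤ norm3 p + norm3 q := by
  simp only [norm3_eq, map_add]; exact norm_add_le _ _

lemma norm3_neg (p : ℝ × ℝ × ℝ) : norm3 (-p) = norm3 p := by
  simp only [norm3_eq, map_neg, norm_neg]

lemma norm_le_norm3 (p : ℝ × ℝ × ℝ) : ‖p‖ ≤ norm3 p := by
  have h : ∀ x y zz : ℝ, |x| ≤ Real.sqrt (x ^ 2 + y ^ 2 + zz ^ 2) := by
    intro x y zz
    rw [← Real.sqrt_sq_eq_abs]
    exact Real.sqrt_le_sqrt (by nlinarith)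
  rw [Prod.norm_def, Prod.norm_def]
  simp only [Real.norm_eq_abs, norm3]
  refine max_le (h _ _ _) (max_le ?_ ?_)
  · have := h p.2.1 p.1 p.2.2; calc |p.2.1| ≤ _ := this
      _ = _ := by ring_nf
  · have := h p.2.2 p.1 p.2.1; calc |p.2.2| ≤ _ := this
      _ = _ := by ring_nf

lemma norm3_box_sub_le {p q : ℝ × ℝ × ℝ} (hp : p ∈ unitBox) (hq : q ∈ unitBox) :
    norm3 (p - q) ≤ 2 := by
  obtain ⟨hp1, hp2, hp3⟩ := hp
  obtain ⟨hq1, hq2, hq3⟩ := hq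
  simp only [Set.mem_Icc] at hp1 hp2 hp3 hq1 hq2 hq3
  have : norm3 (p - q) ≤ Real.sqrt 4 := by
    unfold norm3
    apply Real.sqrt_le_sqrt
    simp only [Prod.fst_sub, Prod.snd_sub]
    nlinarith [hp1.1, hp1.2, hp2.1, hp2.2, hp3.1, hp3.2, hq1.1, hq1.2, hq2.1, hq2.2, hq3.1, hq3.2]
  calc norm3 (p - q) ≤ Real.sqrt 4 := this
    _ = 2 := by rw [show (4:ℝ) = 2 ^ 2 by norm_num, Real.sqrt_sq (by norm_num)]

lemma norm3_intervalIntegral_le {f : ℝ → ℝ × ℝ × ℝ} {a b : ℝ} (hab : a ≤ b)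
    (hf : IntervalIntegrable f MeasureTheory.volume a b) :
    norm3 (∫ s in a..b, f s) ≤ ∫ s in a..b, norm3 (f s) := by
  rw [norm3_eq, ← ContinuousLinearMap.intervalIntegral_comp_comm Lclm3 hf]
  calc ‖∫ s in a..b, Lclm3 (f s)‖ ≤ ∫ s in a..b, ‖Lclm3 (f s)‖ :=
        intervalIntegral.norm_integral_le_integral_norm hab
    _ = ∫ s in a..b, norm3 (f s) := by simp only [norm3_eq]

lemma intervalIntegrable_of_bdd {E : Type*} [MeasurableSpace E] [NormedAddCommGroup E]
    {f : ℝ → E} {a b C : ℝ} (hab : a ≤ b)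
    (hm : MeasureTheory.AEStronglyMeasurable f
      (MeasureTheory.volume.restrict (Set.Ioc a b)))
    (hb : ∀ s ∈ Set.Ioc a b, ‖f s‖ ≤ C) :
    IntervalIntegrable f MeasureTheory.volume a b := by
  rw [intervalIntegrable_iff_integrableOn_Ioc_of_le hab]
  exact MeasureTheory.Integrable.mono' (MeasureTheory.integrable_const C) hm
    ((MeasureTheory.ae_restrict_iff' measurableSet_Ioc).2 (MeasureTheory.ae_of_all _ hb))

lemma le_biSup_Iic {M : ℕ} (v : ℕ → ℝ) (hv : ∀ n, 0 ≤ v n) {n : ℕ} (hn : n ≤ M) :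
    v n ≤ ⨆ m ∈ Finset.Iic M, v m := by
  have hb : ∀ m, (⨆ _ : m ∈ Finset.Iic M, v m) ≤ ∑ k ∈ Finset.Iic M, v k := by
    intro m
    by_cases h : m ∈ Finset.Iic M
    · rw [ciSup_pos h]
      exact Finset.single_le_sum (fun k _ => hv k) h
    · simp only [h]
      haveI : IsEmpty (m ∈ Finset.Iic M) := ⟨h⟩
      rw [Real.iSup_of_isEmpty]
      exact Finset.sum_nonneg fun k _ => hv k
  calc v n = ⨆ _ : n ∈ Finset.Iic M, v n := by
        rw [ciSup_pos (Finset.mem_Iic.2 hn)]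
    _ ≤ ⨆ m ∈ Finset.Iic M, v m :=
        le_ciSup (⟨_, Set.forall_mem_range.2 hb⟩ : BddAbove _) n

open MeasureTheory in
lemma key_integrable {c : ℝ} (hc : 0 < c) {G : ℝ}
    (g : ℝ × ℝ × ℝ → ℝ × ℝ × ℝ) (z : ℝ → ℝ × ℝ × ℝ)
    (hbdf : ∀ t ∈ Set.Icc (0 : ℝ) c, ‖g (z t)‖ ≤ G)
    (hz : ∀ t ∈ Set.Icc (0 : ℝ) c, z t = z 0 + ∫ τ in (0 : ℝ)..t, g (z τ)) :
    IntegrableOn (fun s => g (z s)) (Set.Ioc 0 c) volume := by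
  set f : ℝ → ℝ × ℝ × ℝ := fun s => g (z s) with hf
  set S : Set ℝ := {t | t ∈ Set.Icc (0 : ℝ) c ∧ IntegrableOn f (Set.Ioc 0 t) volume} with hS
  have h0S : (0 : ℝ) ∈ S := ⟨⟨le_refl 0, hc.le⟩, by simp [Set.Ioc_self]⟩
  have hSbdd : BddAbove S := ⟨c, fun t ht => ht.1.2⟩
  set σ := sSup S with hσ
  have hσ0 : 0 ≤ σ := le_csSup hSbdd h0S
  have hσc : σ ≤ c := csSup_le ⟨0, h0S⟩ fun t ht => ht.1.2
  have hlt : ∀ t, 0 ≤ t → t < σ → IntegrableOn f (Set.Ioc 0 t) volume := by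
    intro t ht0 htσ
    obtain ⟨s, hsS, hts⟩ := exists_lt_of_lt_csSup ⟨0, h0S⟩ htσ
    exact hsS.2.mono_set (Set.Ioc_subset_Ioc_right hts.le)
  have hσS : IntegrableOn f (Set.Ioc 0 σ) volume := by
    rcases eq_or_lt_of_le hσ0 with h | h
    · rw [← h]; simp [Set.Ioc_self]
    · have hunion : (⋃ n : ℕ, Set.Ioc (0 : ℝ) (max 0 (σ - 1 / (n + 1)))) = Set.Ioo 0 σ := by
        ext s
        simp only [Set.mem_iUnion, Set.mem_Ioc, Set.mem_Ioo]
        constructor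
        · rintro ⟨n, hs0, hsn⟩
          exact ⟨hs0, lt_of_le_of_lt hsn (max_lt h (by
            have : (0:ℝ) < 1 / (n + 1) := by positivity
            linarith))⟩
        · rintro ⟨hs0, hsσ⟩
          obtain ⟨n, hn⟩ := exists_nat_one_div_lt (show (0:ℝ) < σ - s by linarith)
          exact ⟨n, hs0, le_max_of_le_right (by linarith)⟩
      have hm : AEStronglyMeasurable f (volume.restrict (Set.Ioo 0 σ)) := by
        rw [← hunion, aestronglyMeasurable_iUnion_iff]
        intro n
        refine (hlt _ (le_max_left _ _) ?_).aestronglyMeasurable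
        have h1 : (0:ℝ) < 1 / ((n:ℝ) + 1) := by positivity
        exact max_lt h (by linarith)
      have hintoo : IntegrableOn f (Set.Ioo 0 σ) volume := by
        refine Integrable.mono' (integrable_const G) hm ?_
        refine (ae_restrict_iff' measurableSet_Ioo).2 (ae_of_all _ ?_)
        intro s hs
        exact hbdf s ⟨hs.1.le, hs.2.le.trans hσc⟩
      exact hintoo.congr_set_ae (MeasureTheory.Ioo_ae_eq_Ioc).symm
  by_contra hnc
  have hσlt : σ < c := lt_of_le_of_ne hσc (fun h' => hnc (h' ▸ hσS))
  have hz0 : ∀ t ∈ Set.Ioc σ c, z t = z 0 := by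
    intro t ht
    have ht0 : 0 ≤ t := hσ0.trans ht.1.le
    have hnotint : ¬ IntegrableOn f (Set.Ioc 0 t) volume := fun hI =>
      absurd (le_csSup hSbdd ⟨⟨ht0, ht.2⟩, hI⟩) (not_le.2 ht.1)
    have hzero : (∫ τ in (0 : ℝ)..t, f τ) = 0 :=
      intervalIntegral.integral_undef (by
        rwa [intervalIntegrable_iff_integrableOn_Ioc_of_le ht0])
    rw [hz t ⟨ht0, ht.2⟩, hzero, add_zero]
  refine hnc ?_
  rw [← Set.Ioc_union_Ioc_eq_Ioc hσ0 hσc]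
  refine hσS.union ?_
  have heq : Set.EqOn f (fun _ => g (z 0)) (Set.Ioc σ c) := fun t ht => by
    simp only [hf]; rw [hz0 t ht]
  exact (integrableOn_congr_fun heq measurableSet_Ioc).2
    (integrableOn_const measure_Ioc_lt_top.ne)

lemma intervalIntegrable_norm3 {f : ℝ → ℝ × ℝ × ℝ} {a b : ℝ}
    (hf : IntervalIntegrable f volume a b) :
    IntervalIntegrable (fun s => norm3 (f s)) volume a b := by
  have h1 : IntervalIntegrable (fun s => Lclm3 (f s)) volume a b :=
    ⟨Lclm3.integrable_comp hf.1, Lclm3.integrable_comp hf.2⟩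
  simpa [norm3_eq] using h1.norm

lemma continuous_norm3 : Continuous norm3 :=
  (continuous_norm.comp Lclm3.continuous).congr fun p => (norm3_eq p).symm

lemma norm3_add4_le (p q r s : ℝ × ℝ × ℝ) :
    norm3 (p + q + r + -s) ≤ norm3 p + norm3 q + norm3 r + norm3 s := by
  calc norm3 (p + q + r + -s) ≤ norm3 (p + q + r) + norm3 (-s) := norm3_add_le _ _
    _ = norm3 (p + q + r) + norm3 s := by rw [norm3_neg]
    _ ≤ (norm3 (p + q) + norm3 r) + norm3 s := by
        exact add_le_add_left (norm3_add_le _ _) _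
    _ ≤ ((norm3 p + norm3 q) + norm3 r) + norm3 s := by
        exact add_le_add_left (add_le_add_left (norm3_add_le _ _) _) _

set_option maxHeartbeats 1000000 in
/-- Deterministic Gronwall-type comparison between the discrete evolution
`Z_n = Z_0 + Σ_{k=1}^n A_k + (1/N) Σ_{k=0}^{n−1} g(Z_k)` and the continuous one
`z_t = z_0 + ∫_0^t g(z_s) ds`, for a `K`-Lipschitz drift `g` bounded by `G` on `[0,1]³`:
for all `t ∈ [0,c]`,
`‖Z_{⌊Nt⌋} − z_t‖ ≤ (‖Z_0 − z_0‖ + max_{n ≤ ⌊cN⌋} ‖Σ_{k=1}^n A_k‖ + G/N) e^{Kt}`. -/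

theorem discrete_gronwall_comparison
    (c K G : ℝ) (hc : 0 < c) (hK : 0 < K) (hG : 0 < G)
    (N : ℕ) (hN : 1 ≤ N)
    (g : ℝ × ℝ × ℝ → ℝ × ℝ × ℝ)
    (hLip : ∀ p ∈ unitBox, ∀ q ∈ unitBox, norm3 (g p - g q) ≤ K * norm3 (p - q))
    (hbd : ∀ p ∈ unitBox, norm3 (g p) ≤ G)
    (z : ℝ → ℝ × ℝ × ℝ)
    (hzmem : ∀ t ∈ Set.Icc (0 : ℝ) c, z t ∈ unitBox)
    (hz : ∀ t ∈ Set.Icc (0 : ℝ) c, z t = z 0 + ∫ τ in (0 : ℝ)..t, g (z τ))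
    (Z : ℕ → ℝ × ℝ × ℝ) (A : ℕ → ℝ × ℝ × ℝ)
    (hZmem : ∀ n ≤ ⌊c * (N : ℝ)⌋₊, Z n ∈ unitBox)
    (hZ : ∀ n ≤ ⌊c * (N : ℝ)⌋₊,
      Z n = Z 0 + (∑ k ∈ Finset.Icc 1 n, A k) +
        (1 / (N : ℝ)) • ∑ k ∈ Finset.range n, g (Z k)) :
    ∀ t ∈ Set.Icc (0 : ℝ) c,
      norm3 (Z ⌊(N : ℝ) * t⌋₊ - z t) ≤
        (norm3 (Z 0 - z 0) +
            (⨆ n ∈ Finset.Iic ⌊c * (N : ℝ)⌋₊, norm3 (∑ k ∈ Finset.Icc 1 n, A k)) +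
            G / N) * Real.exp (K * t) := by
  have hNpos : (0 : ℝ) < N := by exact_mod_cast Nat.pos_of_ne_zero (by omega)
  set M := ⌊c * (N : ℝ)⌋₊ with hMdef
  set Asup := ⨆ n ∈ Finset.Iic M, norm3 (∑ k ∈ Finset.Icc 1 n, A k) with hAsup
  set a := norm3 (Z 0 - z 0) + Asup + G / N with hadef
  set f : ℝ → ℝ × ℝ × ℝ := fun s => g (z s) with hfdef
  set h : ℝ → ℝ × ℝ × ℝ := fun s => g (Z ⌊(N : ℝ) * s⌋₊) with hhdef
  set φ : ℝ → ℝ := fun s => norm3 (Z ⌊(N : ℝ) * s⌋₊ - z s) with hφdef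
  set ψ : ℝ → ℝ := fun u => ∫ s in (0 : ℝ)..u, φ s with hψdef
  have hfloor_le : ∀ s : ℝ, s ≤ c → ⌊(N : ℝ) * s⌋₊ ≤ M := by
    intro s hs
    rw [hMdef, mul_comm c (N : ℝ)]
    exact Nat.floor_mono (by nlinarith)
  have hMle : (M : ℝ) ≤ c * N := Nat.floor_le (by positivity)
  -- integrability of f
  have hbdf : ∀ s ∈ Set.Icc (0 : ℝ) c, ‖f s‖ ≤ G := fun s hs =>
    (norm_le_norm3 _).trans (hbd _ (hzmem s hs))
  have hint_c : IntegrableOn f (Set.Ioc 0 c) volume := key_integrable hc g z hbdf hz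
  have hint_f : ∀ x y : ℝ, 0 ≤ x → x ≤ y → y ≤ c → IntervalIntegrable f volume x y := by
    intro x y hx hxy hyc
    rw [intervalIntegrable_iff_integrableOn_Ioc_of_le hxy]
    exact hint_c.mono_set (Set.Ioc_subset_Ioc hx hyc)
  -- z increments
  have hzsub : ∀ x ∈ Set.Icc (0 : ℝ) c, ∀ y ∈ Set.Icc (0 : ℝ) c, x ≤ y →
      z y - z x = ∫ τ in x..y, f τ := by
    intro x hx y hy hxy
    rw [hz y hy, hz x hx,
      ← integral_interval_sub_left (hint_f 0 y le_rfl hy.1 hy.2) (hint_f 0 x le_rfl hx.1 hx.2)]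
    abel
  have hint_nf : ∀ {x y : ℝ}, IntervalIntegrable f volume x y →
      IntervalIntegrable (fun s => norm3 (f s)) volume x y := fun hf => intervalIntegrable_norm3 hf
  have hznorm : ∀ x ∈ Set.Icc (0 : ℝ) c, ∀ y ∈ Set.Icc (0 : ℝ) c, x ≤ y →
      norm3 (z y - z x) ≤ G * (y - x) := by
    intro x hx y hy hxy
    rw [hzsub x hx y hy hxy]
    have hI := hint_f x y hx.1 hxy hy.2
    calc norm3 (∫ τ in x..y, f τ) ≤ ∫ τ in x..y, norm3 (f τ) :=
          norm3_intervalIntegral_le hxy hI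
      _ ≤ ∫ _ in x..y, G := by
          refine integral_mono_on hxy (intervalIntegrable_norm3 hI)
            intervalIntegrable_const fun s hs => ?_
          exact hbd _ (hzmem s ⟨hx.1.trans hs.1, hs.2.trans hy.2⟩)
      _ = G * (y - x) := by rw [intervalIntegral.integral_const]; simp [mul_comm]
  have hzcont : ContinuousOn z (Set.Icc 0 c) := by
    refine LipschitzOnWith.continuousOn (K := Real.toNNReal G) ?_
    refine LipschitzOnWith.of_dist_le_mul fun x hx y hy => ?_
    rcases le_total x y with hxy | hxy
    · rw [dist_eq_norm, norm_sub_rev]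
      calc ‖z y - z x‖ ≤ norm3 (z y - z x) := norm_le_norm3 _
        _ ≤ G * (y - x) := hznorm x hx y hy hxy
        _ ≤ Real.toNNReal G * dist x y := by
            rw [Real.coe_toNNReal _ hG.le, Real.dist_eq, abs_of_nonpos (by linarith)]
            nlinarith
    · rw [dist_eq_norm]
      calc ‖z x - z y‖ ≤ norm3 (z x - z y) := norm_le_norm3 _
        _ ≤ G * (x - y) := hznorm y hy x hx hxy
        _ ≤ Real.toNNReal G * dist x y := by
            rw [Real.coe_toNNReal _ hG.le, Real.dist_eq, abs_of_nonneg (by linarith : (0:ℝ) ≤ x - y)]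
  -- h measurable & bounded
  have hfloor_meas : Measurable fun s : ℝ => ⌊(N : ℝ) * s⌋₊ :=
    Nat.measurable_floor.comp (measurable_id.const_mul _)
  have hmeas_h : Measurable h :=
    Measurable.comp (f := fun s : ℝ => ⌊(N : ℝ) * s⌋₊) (g := fun n => g (Z n))
      measurable_from_nat hfloor_meas
  have hbd_h : ∀ s : ℝ, s ≤ c → ‖h s‖ ≤ G := fun s hs =>
    (norm_le_norm3 _).trans (hbd _ (hZmem _ (hfloor_le s hs)))
  have hbd_h3 : ∀ s : ℝ, s ≤ c → norm3 (h s) ≤ G := fun s hs =>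
    hbd _ (hZmem _ (hfloor_le s hs))
  have hint_h : ∀ x y : ℝ, x ≤ y → y ≤ c → IntervalIntegrable h volume x y := by
    intro x y hxy hyc
    exact intervalIntegrable_of_bdd hxy hmeas_h.aestronglyMeasurable.restrict
      fun s hs => hbd_h s (hs.2.trans hyc)
  -- φ measurable & bounded
  have hmeasφ : AEStronglyMeasurable φ (volume.restrict (Set.Icc 0 c)) := by
    have h1 : Measurable fun s : ℝ => Z ⌊(N : ℝ) * s⌋₊ :=
      Measurable.comp (f := fun s : ℝ => ⌊(N : ℝ) * s⌋₊) (g := Z)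
        measurable_from_nat hfloor_meas
    have h2 : AEStronglyMeasurable z (volume.restrict (Set.Icc 0 c)) :=
      hzcont.aestronglyMeasurable measurableSet_Icc
    exact continuous_norm3.comp_aestronglyMeasurable (h1.aestronglyMeasurable.sub h2)
  have hbdφ : ∀ s ∈ Set.Icc (0 : ℝ) c, φ s ≤ 2 := fun s hs =>
    norm3_box_sub_le (hZmem _ (hfloor_le s hs.2)) (hzmem s hs)
  have hφnn : ∀ s, 0 ≤ φ s := fun s => norm3_nonneg _
  have hint_φ : ∀ x y : ℝ, 0 ≤ x → x ≤ y → y ≤ c → IntervalIntegrable φ volume x y := by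
    intro x y hx hxy hyc
    refine intervalIntegrable_of_bdd (C := 2) hxy
      (hmeasφ.mono_measure (Measure.restrict_mono
        (Set.Ioc_subset_Icc_self.trans (Set.Icc_subset_Icc hx hyc)) le_rfl)) fun s hs => ?_
    rw [Real.norm_eq_abs, abs_of_nonneg (hφnn s)]
    exact hbdφ s ⟨hx.trans hs.1.le, hs.2.trans hyc⟩
  -- key Gronwall-type inequality
  have key : ∀ t ∈ Set.Icc (0 : ℝ) c, φ t ≤ a + K * ψ t := by
    intro t ht
    obtain ⟨ht0, htc⟩ := ht
    set n := ⌊(N : ℝ) * t⌋₊ with hndef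
    have hnM : n ≤ M := hfloor_le t htc
    have hnle : (n : ℝ) ≤ (N : ℝ) * t := Nat.floor_le (by positivity)
    have htn0 : (0 : ℝ) ≤ (n : ℝ) / N := by positivity
    have htnle : (n : ℝ) / N ≤ t := by rw [div_le_iff₀ hNpos]; nlinarith
    have hlt1 : (N : ℝ) * t < n + 1 := Nat.lt_floor_add_one _
    have htlt : t - (n : ℝ) / N ≤ 1 / N := by
      have h1 : t ≤ ((n : ℝ) + 1) / N := by rw [le_div_iff₀ hNpos]; nlinarith
      have h2 : ((n : ℝ) + 1) / N = (n : ℝ) / N + 1 / N := add_div _ _ _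
      linarith
    have hpiece : ∀ k : ℕ, k < n → (∫ s in ((k : ℝ) / N)..(((k : ℝ) + 1) / N), h s)
        = (1 / (N : ℝ)) • g (Z k) := by
      intro k hk
      have hk1 : ((k : ℝ) + 1) ≤ c * N := by
        have hkM : (k + 1 : ℕ) ≤ M := le_trans (Nat.succ_le_of_lt hk) hnM
        calc ((k : ℝ) + 1) = ((k + 1 : ℕ) : ℝ) := by push_cast; ring
          _ ≤ (M : ℝ) := by exact_mod_cast hkM
          _ ≤ c * N := hMle
      have hkk : (k : ℝ) / N ≤ ((k : ℝ) + 1) / N := by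
        rw [div_le_div_iff₀ hNpos hNpos]; nlinarith
      have hae : ∀ᵐ s : ℝ, s ≠ ((k : ℝ) + 1) / N := by
        rw [MeasureTheory.ae_iff]
        have : {s : ℝ | ¬s ≠ ((k : ℝ) + 1) / N} = {((k : ℝ) + 1) / N} := by
          ext u; simp [not_not]
        rw [this]
        exact Real.volume_singleton
      rw [intervalIntegral.integral_congr_ae (g := fun _ => g (Z k)) ?_,
        intervalIntegral.integral_const]
      · rw [show ((k : ℝ) + 1) / N - (k : ℝ) / N = 1 / N by rw [div_sub_div_same]; norm_num]
      · filter_upwards [hae] with s hs hmem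
        rw [Set.uIoc_of_le hkk] at hmem
        have hs1 : (k : ℝ) / N < s := hmem.1
        have hs2 : s < ((k : ℝ) + 1) / N := lt_of_le_of_ne hmem.2 hs
        have hks : (k : ℝ) < (N : ℝ) * s := by
          rw [div_lt_iff₀ hNpos] at hs1; nlinarith
        have hks2 : (N : ℝ) * s < (k : ℝ) + 1 := by
          rw [lt_div_iff₀ hNpos] at hs2; nlinarith
        have hsfloor : ⌊(N : ℝ) * s⌋₊ = k := by
          rw [Nat.floor_eq_iff (le_trans (Nat.cast_nonneg k) hks.le)]
          exact ⟨hks.le, hks2⟩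
        show g (Z ⌊(N : ℝ) * s⌋₊) = g (Z k)
        rw [hsfloor]
    have hsum : (1 / (N : ℝ)) • (∑ k ∈ Finset.range n, g (Z k))
        = ∫ s in (0 : ℝ)..((n : ℝ) / N), h s := by
      have hint' : ∀ k < n, IntervalIntegrable h volume ((k : ℝ) / N) (((k + 1 : ℕ) : ℝ) / N) := by
        intro k hk
        have hkM : (k + 1 : ℕ) ≤ M := le_trans (Nat.succ_le_of_lt hk) hnM
        have hk1c : ((k + 1 : ℕ) : ℝ) / N ≤ c := by
          rw [div_le_iff₀ hNpos]
          calc ((k + 1 : ℕ) : ℝ) ≤ (M : ℝ) := by exact_mod_cast hkM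
            _ ≤ c * N := hMle
        refine hint_h _ _ ?_ hk1c
        rw [div_le_div_iff₀ hNpos hNpos]; push_cast; nlinarith
      have heq := intervalIntegral.sum_integral_adjacent_intervals
        (a := fun k : ℕ => (k : ℝ) / N) (μ := volume) (f := h) (n := n) hint'
      rw [Finset.smul_sum]
      calc ∑ k ∈ Finset.range n, (1 / (N : ℝ)) • g (Z k)
          = ∑ k ∈ Finset.range n, ∫ s in ((k : ℝ) / N)..(((k + 1 : ℕ) : ℝ) / N), h s := by
            refine Finset.sum_congr rfl fun k hk => ?_
            rw [show (((k + 1 : ℕ) : ℝ)) = (k : ℝ) + 1 by push_cast; ring,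
              hpiece k (Finset.mem_range.1 hk)]
        _ = ∫ s in (((0 : ℕ) : ℝ) / N)..((n : ℝ) / N), h s := heq
        _ = ∫ s in (0 : ℝ)..((n : ℝ) / N), h s := by norm_num
    have hIf : IntervalIntegrable f volume 0 t := hint_f 0 t le_rfl ht0 htc
    have hIh : IntervalIntegrable h volume 0 t := hint_h 0 t ht0 htc
    have hIh2 : IntervalIntegrable h volume ((n : ℝ) / N) t := hint_h _ t htnle htc
    have hIh1 : IntervalIntegrable h volume 0 ((n : ℝ) / N) := hint_h 0 _ htn0 (htnle.trans htc)
    have hsplit : (∫ s in (0 : ℝ)..((n : ℝ) / N), h s)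
        = (∫ s in (0 : ℝ)..t, h s) - ∫ s in ((n : ℝ) / N)..t, h s := by
      rw [← intervalIntegral.integral_add_adjacent_intervals hIh1 hIh2]; abel
    have hid : Z n - z t = (Z 0 - z 0) + (∑ k ∈ Finset.Icc 1 n, A k)
        + (∫ s in (0 : ℝ)..t, (h s - f s)) + -(∫ s in ((n : ℝ) / N)..t, h s) := by
      rw [intervalIntegral.integral_sub hIh hIf, hZ n hnM, hz t ⟨ht0, htc⟩, hsum, hsplit]
      abel
    have b2 : norm3 (∑ k ∈ Finset.Icc 1 n, A k) ≤ Asup :=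
      le_biSup_Iic (fun m => norm3 (∑ k ∈ Finset.Icc 1 m, A k)) (fun m => norm3_nonneg _) hnM
    have b3 : norm3 (∫ s in (0 : ℝ)..t, (h s - f s)) ≤ K * ψ t := by
      have hsub : IntervalIntegrable (fun s => h s - f s) volume 0 t := hIh.sub hIf
      calc norm3 (∫ s in (0 : ℝ)..t, (h s - f s)) ≤ ∫ s in (0 : ℝ)..t, norm3 (h s - f s) :=
            norm3_intervalIntegral_le ht0 hsub
        _ ≤ ∫ s in (0 : ℝ)..t, K * φ s := by
            refine integral_mono_on ht0 (intervalIntegrable_norm3 hsub)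
              ((hint_φ 0 t le_rfl ht0 htc).const_mul K) fun s hs => ?_
            have hs' : s ∈ Set.Icc (0 : ℝ) c := ⟨hs.1, hs.2.trans htc⟩
            exact hLip _ (hZmem _ (hfloor_le s hs'.2)) _ (hzmem s hs')
        _ = K * ψ t := by rw [intervalIntegral.integral_const_mul]
    have b4 : norm3 (∫ s in ((n : ℝ) / N)..t, h s) ≤ G / N := by
      calc norm3 (∫ s in ((n : ℝ) / N)..t, h s) ≤ ∫ s in ((n : ℝ) / N)..t, norm3 (h s) :=
            norm3_intervalIntegral_le htnle hIh2
        _ ≤ ∫ _ in ((n : ℝ) / N)..t, G :=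
            integral_mono_on htnle (intervalIntegrable_norm3 hIh2) intervalIntegrable_const
              fun s hs => hbd_h3 s (hs.2.trans htc)
        _ = (t - (n : ℝ) / N) * G := by
            rw [intervalIntegral.integral_const, smul_eq_mul]
        _ ≤ (1 / N) * G := mul_le_mul_of_nonneg_right htlt hG.le
        _ = G / N := by ring
    have tri : φ t ≤ norm3 (Z 0 - z 0) + norm3 (∑ k ∈ Finset.Icc 1 n, A k)
        + norm3 (∫ s in (0 : ℝ)..t, (h s - f s)) + norm3 (∫ s in ((n : ℝ) / N)..t, h s) := by
      show norm3 (Z n - z t) ≤ _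
      rw [hid]
      exact norm3_add4_le _ _ _ _
    have hψt : ψ t = ∫ s in (0 : ℝ)..t, φ s := rfl
    rw [hadef]
    linarith
  -- continuity of ψ
  have hψcont : ContinuousOn ψ (Set.Icc 0 c) := by
    have hc' := intervalIntegral.continuousOn_primitive_interval'
      (hint_φ 0 c le_rfl hc.le le_rfl) (a := 0) (by simp [Set.uIcc_of_le hc.le, hc.le])
    simpa [Set.uIcc_of_le hc.le] using hc'
  have hψderiv : ∀ x ∈ Set.Ico (0 : ℝ) c, HasDerivWithinAt ψ (φ x) (Set.Ici x) x := by
    intro x hx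
    have hsm : StronglyMeasurableAtFilter φ (nhdsWithin x (Set.Ioi x)) volume := by
      refine ⟨Set.Ioi x ∩ Set.Iio c, inter_mem_nhdsWithin _ (Iio_mem_nhds hx.2), ?_⟩
      exact hmeasφ.mono_measure (Measure.restrict_mono
        (show Set.Ioi x ∩ Set.Iio c ⊆ Set.Icc 0 c from fun s hs =>
          Set.mem_Icc.2 ⟨hx.1.trans hs.1.le, hs.2.le⟩) le_rfl)
    have hz' : ContinuousWithinAt z (Set.Ici x) x := by
      refine (hzcont x ⟨hx.1, hx.2.le⟩).mono_of_mem_nhdsWithin ?_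
      refine Filter.mem_of_superset (inter_mem_nhdsWithin _ (Iio_mem_nhds hx.2)) ?_
      exact fun s hs => ⟨hx.1.trans hs.1, hs.2.le⟩
    have hco : ContinuousWithinAt (fun s => norm3 (Z ⌊(N : ℝ) * x⌋₊ - z s)) (Set.Ici x) x :=
      continuous_norm3.continuousAt.comp_continuousWithinAt
        (continuousWithinAt_const.sub hz')
    have hxlt : x < (((⌊(N : ℝ) * x⌋₊ : ℕ) : ℝ) + 1) / N := by
      rw [lt_div_iff₀ hNpos]
      have := Nat.lt_floor_add_one ((N : ℝ) * x)
      nlinarith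
    have hev : φ =ᶠ[nhdsWithin x (Set.Ici x)] fun s => norm3 (Z ⌊(N : ℝ) * x⌋₊ - z s) := by
      refine Filter.eventually_of_mem
        (inter_mem_nhdsWithin _ (Iio_mem_nhds hxlt)) ?_
      intro s hs
      have hs0 : (0 : ℝ) ≤ s := hx.1.trans hs.1
      have hfl : ⌊(N : ℝ) * s⌋₊ = ⌊(N : ℝ) * x⌋₊ := by
        rw [Nat.floor_eq_iff (mul_nonneg (Nat.cast_nonneg N) hs0)]
        constructor
        · have h1 : ((⌊(N : ℝ) * x⌋₊ : ℕ) : ℝ) ≤ (N : ℝ) * x :=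
            Nat.floor_le (mul_nonneg (Nat.cast_nonneg N) hx.1)
          have h2 : x ≤ s := hs.1
          nlinarith
        · have h3 : s < (((⌊(N : ℝ) * x⌋₊ : ℕ) : ℝ) + 1) / N := hs.2
          rw [lt_div_iff₀ hNpos] at h3
          nlinarith
      show norm3 (Z ⌊(N : ℝ) * s⌋₊ - z s) = norm3 (Z ⌊(N : ℝ) * x⌋₊ - z s)
      rw [hfl]
    have hcw : ContinuousWithinAt φ (Set.Ici x) x := hco.congr_of_eventuallyEq hev rfl
    exact intervalIntegral.integral_hasDerivWithinAt_right
      (hint_φ 0 x le_rfl hx.1 hx.2.le) hsm (hcw.mono Set.Ioi_subset_Ici_self)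
  have hψnn : ∀ x ∈ Set.Icc (0 : ℝ) c, 0 ≤ ψ x := fun x hx =>
    intervalIntegral.integral_nonneg hx.1 fun s _ => hφnn s
  have gron : ∀ x ∈ Set.Icc (0 : ℝ) c, ‖ψ x‖ ≤ gronwallBound 0 K a (x - 0) := by
    refine norm_le_gronwallBound_of_norm_deriv_right_le hψcont hψderiv ?_ ?_
    · simp [hψdef]
    · intro x hx
      rw [Real.norm_eq_abs, Real.norm_eq_abs, abs_of_nonneg (hφnn x),
        abs_of_nonneg (hψnn x ⟨hx.1, hx.2.le⟩)]
      linarith [key x ⟨hx.1, hx.2.le⟩]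
  intro t ht
  have h1 : ψ t ≤ gronwallBound 0 K a (t - 0) := by
    have := gron t ht
    rwa [Real.norm_eq_abs, abs_of_nonneg (hψnn t ht)] at this
  have h2 : gronwallBound 0 K a (t - 0) = a / K * (Real.exp (K * t) - 1) := by
    rw [gronwallBound_of_K_ne_0 hK.ne']
    simp
  have h3 : φ t ≤ a + K * ψ t := key t ht
  have h4 : K * ψ t ≤ a * (Real.exp (K * t) - 1) := by
    calc K * ψ t ≤ K * (a / K * (Real.exp (K * t) - 1)) := by
          refine mul_le_mul_of_nonneg_left ?_ hK.le
          rw [← h2]; exact h1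
      _ = a * (Real.exp (K * t) - 1) := by field_simp
  calc norm3 (Z ⌊(N : ℝ) * t⌋₊ - z t) = φ t := rfl
    _ ≤ a * Real.exp (K * t) := by linarith
end
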